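/- An odd composite number n is an overpseudoprime to base 2 if and only if the multiplicative order of 2 modulo d is the same for every divisor d > 1 of n. -/

import Mathlib

/-- Multiplicative order of `b` modulo `n`. -/
noncomputable def ordn (b n : ℕ) : ℕ := orderOf (b : ZMod n)

/-- `n` is an overpseudoprime to base `b`: composite, coprime to `b`, and the
multiplicative order of `b` mod `d` is the same for all divisors `d > 1` of `n`. -/
def Overpsp (b n : ℕ) : Prop :=
  1 < n ∧ ¬ n.Prime ∧ Nat.Coprime b n ∧
    ∀ d, d ∣ n → 1 < d → ordn b d = ordn b n

/-- `n` is primover to base `b`: prime or overpseudoprime to base `b`. -/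
def Primover (b n : ℕ) : Prop := n.Prime ∨ Overpsp b n

/-- The cyclotomic coset of `2` modulo `n` containing `s`. -/
def coset (n s : ℕ) : Finset ℕ := (Finset.range n).image (fun k => 2 ^ k * s % n)

/-- The number of distinct cyclotomic cosets of `2` modulo `n`. -/
def numCosets (n : ℕ) : ℕ := ((Finset.Ioo 0 n).image (coset n)).card

/-- `Φ_N(b)` as a natural number. -/
noncomputable def PhiN (N b : ℕ) : ℕ := ((Polynomial.cyclotomic N ℤ).eval (b : ℤ)).toNat

lemma ordn_eq_orderOf_unit (m : ℕ) (hm : 1 < m) (hodd : Odd m) :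
    ∃ v : (ZMod m)ˣ, (v : ZMod m) = ((2 : ℕ) : ZMod m) ∧ ordn 2 m = orderOf v := by
  haveI : NeZero m := ⟨by omega⟩
  have hu : IsUnit ((2 : ℕ) : ZMod m) :=
    (ZMod.isUnit_iff_coprime 2 m).mpr hodd.coprime_two_left
  obtain ⟨v, hv⟩ := hu
  exact ⟨v, hv, by rw [ordn, ← hv, orderOf_units]⟩

lemma ordn_pos (m : ℕ) (hm : 1 < m) (hodd : Odd m) : 0 < ordn 2 m := by
  haveI : NeZero m := ⟨by omega⟩
  obtain ⟨v, _, hv⟩ := ordn_eq_orderOf_unit m hm hodd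
  rw [hv]; exact orderOf_pos v

lemma ordn_le (m : ℕ) (hm : 1 < m) : ordn 2 m ≤ m := by
  haveI : NeZero m := ⟨by omega⟩
  have := orderOf_le_card_univ (x := ((2:ℕ) : ZMod m))
  simpa [ordn, ZMod.card] using this

lemma ordn_dvd_of_dvd (d m : ℕ) (h : d ∣ m) (hm : 0 < m) : ordn 2 d ∣ ordn 2 m := by
  haveI : NeZero m := ⟨by omega⟩
  rw [ordn, ordn, ← map_natCast (ZMod.castHom h (ZMod d)) 2]
  exact orderOf_map_dvd (ZMod.castHom h (ZMod d)).toMonoidHom _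

lemma odd_of_dvd {n d : ℕ} (hodd : Odd n) (h : d ∣ n) : Odd d := by
  rcases Nat.even_or_odd d with he | ho
  · obtain ⟨r, hr⟩ := he
    obtain ⟨c, hc⟩ := h
    have hn2 : n = 2 * (r * c) := by subst hc hr; ring
    have := Nat.odd_iff.mp hodd
    omega
  · exact ho

lemma key (n : ℕ) (hn : 1 < n) (hodd : Odd n) (s : ℕ) (hs0 : 0 < s) (hsn : s < n)
    (k j : ℕ) :
    2 ^ k * s % n = 2 ^ j * s % n ↔ k ≡ j [MOD ordn 2 (n / Nat.gcd n s)] := by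
  set g := Nat.gcd n s with hg
  have hg0 : 0 < g := Nat.gcd_pos_of_pos_left s (by omega)
  set d := n / g with hd
  set u := s / g with hu
  have hnd : g * d = n := Nat.mul_div_cancel' (Nat.gcd_dvd_left n s)
  have hsu : g * u = s := Nat.mul_div_cancel' (Nat.gcd_dvd_right n s)
  have hdu : Nat.Coprime d u := Nat.coprime_div_gcd_div_gcd hg0
  have hgs : g ≤ s := Nat.le_of_dvd hs0 (Nat.gcd_dvd_right n s)
  have hd1 : 1 < d := by nlinarith
  have hddvd : d ∣ n := Nat.div_dvd_of_dvd (Nat.gcd_dvd_left n s)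
  have hdodd : Odd d := odd_of_dvd hodd hddvd
  haveI : NeZero d := ⟨by omega⟩
  obtain ⟨v, hv, hov⟩ := ordn_eq_orderOf_unit d hd1 hdodd
  constructor
  · intro h
    have h1 : g * (2 ^ k * u) ≡ g * (2 ^ j * u) [MOD g * d] := by
      have : 2 ^ k * s ≡ 2 ^ j * s [MOD n] := h
      rw [← hsu, ← hnd] at this
      calc g * (2 ^ k * u) = 2 ^ k * (g * u) := by ring
        _ ≡ 2 ^ j * (g * u) [MOD g * d] := this
        _ = g * (2 ^ j * u) := by ring
    have h2 : 2 ^ k * u ≡ 2 ^ j * u [MOD d] :=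
      Nat.ModEq.mul_left_cancel' (by omega) h1
    have h3 : (2:ℕ) ^ k ≡ 2 ^ j [MOD d] :=
      Nat.ModEq.cancel_right_of_coprime (by simpa [Nat.Coprime] using hdu) h2
    have h4 : ((2:ℕ) : ZMod d) ^ k = ((2:ℕ) : ZMod d) ^ j := by
      have := (ZMod.natCast_eq_natCast_iff (2^k) (2^j) d).mpr h3
      push_cast at this ⊢
      exact this
    rw [← hv] at h4
    have h5 : v ^ k = v ^ j := Units.ext (by push_cast; exact h4)
    rw [hov]
    exact pow_eq_pow_iff_modEq.mp h5
  · intro h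
    rw [hov] at h
    have h5 : v ^ k = v ^ j := pow_eq_pow_iff_modEq.mpr h
    have h4 : ((2:ℕ) : ZMod d) ^ k = ((2:ℕ) : ZMod d) ^ j := by
      rw [← hv]; exact_mod_cast congrArg Units.val h5
    have h3 : (2:ℕ) ^ k ≡ 2 ^ j [MOD d] := by
      rw [← ZMod.natCast_eq_natCast_iff]
      push_cast
      exact h4
    have h2 : 2 ^ k * u ≡ 2 ^ j * u [MOD d] := h3.mul_right u
    have h1 : g * (2 ^ k * u) ≡ g * (2 ^ j * u) [MOD g * d] :=
      Nat.ModEq.mul_left' g h2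
    show (2:ℕ) ^ k * s ≡ 2 ^ j * s [MOD n]
    rw [← hsu, ← hnd]
    calc (2:ℕ) ^ k * (g * u) = g * (2 ^ k * u) := by ring
      _ ≡ g * (2 ^ j * u) [MOD g * d] := h1
      _ = 2 ^ j * (g * u) := by ring

lemma div_gcd_gt_one (n s : ℕ) (hn : 1 < n) (hs0 : 0 < s) (hsn : s < n) :
    1 < n / Nat.gcd n s := by
  have hg0 : 0 < Nat.gcd n s := Nat.gcd_pos_of_pos_left s (by omega)
  have hgs : Nat.gcd n s ≤ s := Nat.le_of_dvd hs0 (Nat.gcd_dvd_right n s)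
  have := (Nat.lt_div_iff_mul_lt' (Nat.gcd_dvd_left n s) 1)
  omega

lemma coset_card (n : ℕ) (hn : 1 < n) (hodd : Odd n) (s : ℕ) (hs0 : 0 < s) (hsn : s < n) :
    (coset n s).card = ordn 2 (n / Nat.gcd n s) := by
  set d := n / Nat.gcd n s with hd
  set e := ordn 2 d with he
  have hd1 : 1 < d := div_gcd_gt_one n s hn hs0 hsn
  have hdodd : Odd d := odd_of_dvd hodd (Nat.div_dvd_of_dvd (Nat.gcd_dvd_left n s))
  have he0 : 0 < e := ordn_pos d hd1 hdodd
  have hen : e ≤ n := le_trans (ordn_le d hd1) (Nat.div_le_self n _)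
  have himg : coset n s = (Finset.range e).image (fun k => 2 ^ k * s % n) := by
    apply Finset.Subset.antisymm
    · intro y hy
      obtain ⟨k, hk, rfl⟩ := Finset.mem_image.mp hy
      refine Finset.mem_image.mpr ⟨k % e, Finset.mem_range.mpr (Nat.mod_lt _ he0), ?_⟩
      exact ((key n hn hodd s hs0 hsn (k % e) k).mpr (Nat.mod_modEq k e)).symm.symm
    · intro y hy
      obtain ⟨k, hk, rfl⟩ := Finset.mem_image.mp hy
      exact Finset.mem_image.mpr ⟨k, Finset.mem_range.mpr (lt_of_lt_of_le (Finset.mem_range.mp hk) hen), rfl⟩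
  rw [himg, Finset.card_image_of_injOn, Finset.card_range]
  intro k hk j hj hkj
  have := (key n hn hodd s hs0 hsn k j).mp hkj
  have hk' := Finset.mem_range.mp (Finset.mem_coe.mp hk)
  have hj' := Finset.mem_range.mp (Finset.mem_coe.mp hj)
  have : k % e = j % e := this
  rw [Nat.mod_eq_of_lt hk', Nat.mod_eq_of_lt hj'] at this
  exact this

lemma coset_eq (n : ℕ) (hn : 1 < n) (hodd : Odd n) (s : ℕ) (hs0 : 0 < s) (hsn : s < n)
    (x : ℕ) (hx : x ∈ coset n s) :
    0 < x ∧ x < n ∧ coset n x = coset n s := by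
  obtain ⟨m, hm, rfl⟩ := Finset.mem_image.mp hx
  have hxn : 2 ^ m * s % n < n := Nat.mod_lt _ (by omega)
  have hcop : Nat.Coprime (2 ^ m) n := (hodd.coprime_two_left.pow_left m)
  have hx0 : 0 < 2 ^ m * s % n := by
    rcases Nat.eq_zero_or_pos (2 ^ m * s % n) with h | h
    swap
    · exact h
    · exfalso
      have hdvd : n ∣ 2 ^ m * s := Nat.dvd_of_mod_eq_zero h
      have : n ∣ s := (Nat.Coprime.dvd_of_dvd_mul_left (Nat.Coprime.symm hcop) hdvd)
      have := Nat.le_of_dvd hs0 this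
      omega
  refine ⟨hx0, hxn, ?_⟩
  have hgcd : Nat.gcd n (2 ^ m * s % n) = Nat.gcd n s := by
    rw [Nat.gcd_comm n (2 ^ m * s % n), ← Nat.gcd_rec n (2 ^ m * s),
      Nat.gcd_comm n (2 ^ m * s), Nat.Coprime.gcd_mul_left_cancel s hcop, Nat.gcd_comm]
  set d := n / Nat.gcd n s with hd
  set e := ordn 2 d with he
  have hd1 : 1 < d := div_gcd_gt_one n s hn hs0 hsn
  have hdodd : Odd d := odd_of_dvd hodd (Nat.div_dvd_of_dvd (Nat.gcd_dvd_left n s))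
  have he0 : 0 < e := ordn_pos d hd1 hdodd
  have hen : e ≤ n := le_trans (ordn_le d hd1) (Nat.div_le_self n _)
  have hmulmod : ∀ k : ℕ, 2 ^ k * (2 ^ m * s % n) % n = 2 ^ (k + m) * s % n := by
    intro k
    rw [Nat.mul_mod_mod, pow_add, mul_assoc]
  have hsub : coset n (2 ^ m * s % n) ⊆ coset n s := by
    intro y hy
    obtain ⟨k, hk, rfl⟩ := Finset.mem_image.mp hy
    rw [hmulmod k]
    refine Finset.mem_image.mpr ⟨(k + m) % e, Finset.mem_range.mpr (lt_of_lt_of_le (Nat.mod_lt _ he0) hen), ?_⟩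
    exact (key n hn hodd s hs0 hsn ((k + m) % e) (k + m)).mpr (Nat.mod_modEq _ e)
  refine Finset.eq_of_subset_of_card_le hsub (le_of_eq ?_)
  rw [coset_card n hn hodd s hs0 hsn, coset_card n hn hodd _ hx0 hxn, hgcd]

lemma sum_cosets (n : ℕ) (hn : 1 < n) (hodd : Odd n) :
    ∑ c ∈ (Finset.Ioo 0 n).image (coset n), c.card = n - 1 := by
  set C := (Finset.Ioo 0 n).image (coset n) with hC
  have hself : ∀ y ∈ Finset.Ioo 0 n, y ∈ coset n y := by
    intro y hy
    obtain ⟨hy0, hyn⟩ := Finset.mem_Ioo.mp hy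
    exact Finset.mem_image.mpr ⟨0, Finset.mem_range.mpr (by omega),
      by simp [Nat.mod_eq_of_lt hyn]⟩
  have hU : Finset.Ioo 0 n = C.biUnion id := by
    ext y
    simp only [Finset.mem_biUnion, hC, Finset.mem_image, id]
    constructor
    · intro hy
      exact ⟨coset n y, ⟨y, hy, rfl⟩, hself y hy⟩
    · rintro ⟨c, ⟨s, hs, rfl⟩, hy⟩
      obtain ⟨hs0, hsn⟩ := Finset.mem_Ioo.mp hs
      obtain ⟨h1, h2, _⟩ := coset_eq n hn hodd s hs0 hsn y hy
      exact Finset.mem_Ioo.mpr ⟨h1, h2⟩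
  have hdisj : ∀ c1 ∈ C, ∀ c2 ∈ C, c1 ≠ c2 → Disjoint (id c1) (id c2) := by
    intro c1 hc1 c2 hc2 hne
    obtain ⟨s1, hs1, rfl⟩ := Finset.mem_image.mp hc1
    obtain ⟨s2, hs2, rfl⟩ := Finset.mem_image.mp hc2
    obtain ⟨hs10, hs1n⟩ := Finset.mem_Ioo.mp hs1
    obtain ⟨hs20, hs2n⟩ := Finset.mem_Ioo.mp hs2
    rw [Finset.disjoint_left]
    intro y hy1 hy2
    have e1 := (coset_eq n hn hodd s1 hs10 hs1n y hy1).2.2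
    have e2 := (coset_eq n hn hodd s2 hs20 hs2n y hy2).2.2
    exact hne (by rw [← e1, ← e2])
  have := Finset.card_biUnion hdisj
  rw [← hU] at this
  rw [Nat.card_Ioo] at this
  simpa using this.symm

theorem stmt2 (n : ℕ) (hn : 1 < n) (hodd : Odd n) (hc : ¬ n.Prime) :
    n = numCosets n * ordn 2 n + 1 ↔ ∀ d, d ∣ n → 1 < d → ordn 2 d = ordn 2 n := by
  set T := ordn 2 n with hT
  set C := (Finset.Ioo 0 n).image (coset n) with hC
  have hTpos : 0 < T := ordn_pos n hn hodd
  have hsum : ∑ c ∈ C, c.card = n - 1 := sum_cosets n hn hodd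
  have hle : ∀ c ∈ C, c.card ≤ T := by
    intro c hc'
    obtain ⟨s, hs, rfl⟩ := Finset.mem_image.mp hc'
    obtain ⟨hs0, hsn⟩ := Finset.mem_Ioo.mp hs
    rw [coset_card n hn hodd s hs0 hsn]
    exact Nat.le_of_dvd hTpos
      (ordn_dvd_of_dvd _ n (Nat.div_dvd_of_dvd (Nat.gcd_dvd_left n s)) (by omega))
  constructor
  · intro h d hd hd1
    have hconst : ∑ c ∈ C, c.card = ∑ c ∈ C, T := by
      rw [hsum, Finset.sum_const, smul_eq_mul]
      rw [numCosets, ← hC] at h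
      omega
    have hall := (Finset.sum_eq_sum_iff_of_le hle).mp hconst
    have hs0 : 0 < n / d := Nat.div_pos (Nat.le_of_dvd (by omega) hd) (by omega)
    have hsn : n / d < n := Nat.div_lt_self (by omega) hd1
    have hmem : coset n (n / d) ∈ C :=
      Finset.mem_image_of_mem _ (Finset.mem_Ioo.mpr ⟨hs0, hsn⟩)
    have := hall _ hmem
    rw [coset_card n hn hodd _ hs0 hsn] at this
    rw [Nat.gcd_eq_right (Nat.div_dvd_of_dvd hd), Nat.div_div_self hd (by omega)] at this
    exact this
  · intro h
    have hall : ∀ c ∈ C, c.card = T := by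
      intro c hc'
      obtain ⟨s, hs, rfl⟩ := Finset.mem_image.mp hc'
      obtain ⟨hs0, hsn⟩ := Finset.mem_Ioo.mp hs
      rw [coset_card n hn hodd s hs0 hsn]
      exact h _ (Nat.div_dvd_of_dvd (Nat.gcd_dvd_left n s)) (div_gcd_gt_one n s hn hs0 hsn)
    have : ∑ c ∈ C, c.card = C.card * T := by
      rw [Finset.sum_congr rfl hall, Finset.sum_const, smul_eq_mul]
    rw [hsum] at this
    rw [numCosets, ← hC]
    omega
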